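/- arXiv:2209.01306 — 2 statements merged into one kernel-verified Lean document; each statement's English description precedes it below -/
import Mathlib

section
/- For a nonzero ω ∈ ℝⁿ, the closure of the image of the line ℝω in ℝⁿ/ℤⁿ equals the image of a k-dimensional rational linear subspace V of ℝⁿ containing ω, where k = dim_ℚ (ℚω₁ + ⋯ + ℚωₙ); moreover V ∩ ℤⁿ is a lattice of rank k in V and the closure equals π(V). -/
open Submodule Module Set Filter

private lemma discrete_of_cont_inj' {X Y : Type*} [TopologicalSpace X] [TopologicalSpace Y]
    [DiscreteTopology Y] {f : X → Y} (hc : Continuous f) (hi : Function.Injective f) :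
    DiscreteTopology X := by
  rw [discreteTopology_iff_isOpen_singleton]
  intro x
  have h : {x} = f ⁻¹' {f x} := by ext y; simp [hi.eq_iff]
  rw [h]
  exact (isOpen_discrete _).preimage hc

private lemma eq_zero_of_forall_mul_int {a : ℝ} (h : ∀ t : ℝ, ∃ m : ℤ, t * a = m) : a = 0 := by
  by_contra ha
  obtain ⟨m, hm⟩ := h ((2 * a)⁻¹)
  have h2 : (m : ℝ) = 1 / 2 := by
    rw [← hm]
    field_simp
  have h3 : ((2 * m : ℤ) : ℝ) = 1 := by push_cast; linarith
  have h4 : (2 * m : ℤ) = 1 := by exact_mod_cast h3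
  omega

set_option maxHeartbeats 2000000 in
private theorem dense_line_int {k : ℕ} {α : Fin k → ℝ} (hα : LinearIndependent ℚ α) :
    Dense {x : Fin k → ℝ | ∃ t : ℝ, ∃ m : Fin k → ℤ, x = t • α + fun i => (m i : ℝ)} := by
  classical
  set D : AddSubgroup (Fin k → ℝ) :=
    { carrier := {x : Fin k → ℝ | ∃ t : ℝ, ∃ m : Fin k → ℤ, x = t • α + fun i => (m i : ℝ)}
      zero_mem' := ⟨0, 0, by funext i; simp⟩
      add_mem' := by
        rintro x y ⟨t, m, rfl⟩ ⟨s, l, rfl⟩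
        refine ⟨t + s, m + l, ?_⟩
        funext i
        simp only [Pi.add_apply, Pi.smul_apply, smul_eq_mul, add_smul]
        push_cast
        ring
      neg_mem' := by
        rintro x ⟨t, m, rfl⟩
        refine ⟨-t, -m, ?_⟩
        funext i
        simp only [Pi.add_apply, Pi.neg_apply, Pi.smul_apply, smul_eq_mul, neg_smul]
        push_cast
        ring } with hD
  set G : AddSubgroup (Fin k → ℝ) := D.topologicalClosure with hG
  have hDG : ∀ x ∈ D, x ∈ G := fun x hx => D.le_topologicalClosure hx
  set W : Submodule ℝ (Fin k → ℝ) :=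
    { carrier := {x : Fin k → ℝ | ∀ t : ℝ, t • x ∈ G}
      zero_mem' := fun t => by simpa using G.zero_mem
      add_mem' := by
        intro x y hx hy t
        rw [smul_add]
        exact G.add_mem (hx t) (hy t)
      smul_mem' := by
        intro c x hx t
        rw [smul_smul]
        exact hx (t * c) } with hWdef
  have hWmem : ∀ x : Fin k → ℝ, x ∈ W ↔ ∀ t : ℝ, t • x ∈ G := fun x => Iff.rfl
  have hWG : ∀ x ∈ W, x ∈ G := fun x hx => by simpa using (hWmem x).1 hx 1
  have hαW : α ∈ W := by
    rw [hWmem]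
    intro t
    exact hDG _ ⟨t, 0, by funext i; simp⟩
  have hWtop : W = ⊤ := by
    by_contra hWne
    obtain ⟨W', hWc⟩ := Submodule.exists_isCompl W
    set P : (Fin k → ℝ) →ₗ[ℝ] ↥W' := W'.linearProjOfIsCompl W hWc.symm with hP
    have hPcont : Continuous P := P.continuous_of_finiteDimensional
    have hPleft : ∀ x : ↥W', P ↑x = x := fun x =>
      Submodule.linearProjOfIsCompl_apply_left hWc.symm x
    have hPG : ∀ g ∈ G, ((P g : ↥W') : Fin k → ℝ) ∈ G := by
      intro g hg
      have hker : ((P g : ↥W') : Fin k → ℝ) - g ∈ W := by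
        rw [← Submodule.linearProjOfIsCompl_ker (p := W') (q := W) hWc.symm, LinearMap.mem_ker,
          map_sub]
        change P ((P g : ↥W') : Fin k → ℝ) - P g = 0
        rw [hPleft (P g)]
        simp
      have := G.add_mem hg (hWG _ hker)
      simpa using this
    set DG : Submodule ℤ ↥W' :=
      { carrier := {x : ↥W' | (x : Fin k → ℝ) ∈ G}
        zero_mem' := by simpa using G.zero_mem
        add_mem' := by intro x y hx hy; simpa using G.add_mem hx hy
        smul_mem' := by
          intro c x hx
          have hcoe : ((c • x : ↥W') : Fin k → ℝ) = c • (x : Fin k → ℝ) := rfl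
          show ((c • x : ↥W') : Fin k → ℝ) ∈ G
          rw [hcoe]
          exact AddSubgroup.zsmul_mem G hx c } with hDGdef
    have hDGmem : ∀ x : ↥W', x ∈ DG ↔ (x : Fin k → ℝ) ∈ G := fun x => Iff.rfl
    have key : ∃ ε : ℝ, 0 < ε ∧ ∀ y : ↥W', y ∈ DG → ‖y‖ < ε → y = 0 := by
      by_contra hcon
      push_neg at hcon
      choose g hg1 hg2 hg3 using fun m : ℕ => hcon (1 / (m + 1)) (by positivity)
      have hgne : ∀ m, (g m : Fin k → ℝ) ≠ 0 := by
        intro m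
        simpa [Submodule.coe_eq_zero] using hg3 m
      set u : ℕ → (Fin k → ℝ) := fun m => ‖(g m : Fin k → ℝ)‖⁻¹ • (g m : Fin k → ℝ) with hu
      have hu_sph : ∀ m, u m ∈ Metric.sphere (0 : Fin k → ℝ) 1 := by
        intro m
        rw [mem_sphere_zero_iff_norm, hu]
        rw [norm_smul, norm_inv, norm_norm, inv_mul_cancel₀ (norm_ne_zero_iff.2 (hgne m))]
      obtain ⟨u₀, hu₀, φ, hφ, hconv⟩ := (isCompact_sphere (0 : Fin k → ℝ) 1).tendsto_subseq hu_sph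
      rw [mem_sphere_zero_iff_norm] at hu₀
      have huW' : ∀ m, u m ∈ W' := fun m => W'.smul_mem _ (g m).2
      have hu₀W' : u₀ ∈ W' :=
        (Submodule.closed_of_finiteDimensional W').mem_of_tendsto hconv
          (Filter.Eventually.of_forall fun m => huW' (φ m))
      have hglim : Tendsto (fun m => ‖(g (φ m) : Fin k → ℝ)‖) atTop (nhds 0) := by
        apply squeeze_zero (fun m => norm_nonneg _) (fun m => ?_)
          tendsto_one_div_add_atTop_nhds_zero_nat
        have h1 : ‖(g (φ m) : Fin k → ℝ)‖ < 1 / (φ m + 1) := hg2 (φ m)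
        have hmle : (m : ℝ) ≤ (φ m : ℝ) := by exact_mod_cast hφ.le_apply
        have h2 : (1 : ℝ) / ((φ m : ℝ) + 1) ≤ 1 / ((m : ℝ) + 1) := by
          apply one_div_le_one_div_of_le (by positivity)
          linarith
        linarith
      have hline : ∀ t : ℝ, t • u₀ ∈ G := by
        intro t
        have hclosed : IsClosed (G : Set (Fin k → ℝ)) := AddSubgroup.isClosed_topologicalClosure D
        have htd : Tendsto (fun m => (⌊t / ‖(g (φ m) : Fin k → ℝ)‖⌋ : ℤ) • (g (φ m) : Fin k → ℝ))
            atTop (nhds (t • u₀)) := by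
          rw [tendsto_iff_norm_sub_tendsto_zero]
          apply squeeze_zero (fun m => norm_nonneg _)
            (g := fun m => ‖(g (φ m) : Fin k → ℝ)‖ + |t| * ‖u (φ m) - u₀‖)
          · intro m
            set ε := ‖(g (φ m) : Fin k → ℝ)‖ with hε
            have hεpos : 0 < ε := norm_pos_iff.2 (hgne (φ m))
            have hgu : (g (φ m) : Fin k → ℝ) = ε • u (φ m) := by
              rw [hu, smul_smul, mul_inv_cancel₀ (ne_of_gt hεpos), one_smul]
            have hdecomp : ((⌊t / ε⌋ : ℤ) • (g (φ m) : Fin k → ℝ)) - t • u₀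
                = ((⌊t / ε⌋ : ℝ) * ε - t) • u (φ m) + t • (u (φ m) - u₀) := by
              rw [← Int.cast_smul_eq_zsmul ℝ, hgu, smul_smul, sub_smul, smul_sub]
              abel
            rw [hdecomp]
            refine (norm_add_le _ _).trans ?_
            have hnu : ‖u (φ m)‖ = 1 := by
              have := hu_sph (φ m)
              rwa [mem_sphere_zero_iff_norm] at this
            have h1 : ‖((⌊t / ε⌋ : ℝ) * ε - t) • u (φ m)‖ ≤ ε := by
              rw [norm_smul, hnu, mul_one, Real.norm_eq_abs]
              have ht : t = (t / ε) * ε := by field_simp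
              have hfr : |(⌊t / ε⌋ : ℝ) * ε - t| = Int.fract (t / ε) * ε := by
                rw [abs_sub_comm]
                calc |t - (⌊t / ε⌋ : ℝ) * ε| = |((t / ε) - ⌊t / ε⌋) * ε| := by
                      rw [sub_mul, ← ht]
                  _ = Int.fract (t / ε) * ε := by
                      rw [abs_mul, Int.self_sub_floor, abs_of_nonneg (Int.fract_nonneg _),
                        abs_of_pos hεpos]
              rw [hfr]
              calc Int.fract (t / ε) * ε ≤ 1 * ε :=
                    mul_le_mul_of_nonneg_right (le_of_lt (Int.fract_lt_one _)) (le_of_lt hεpos)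
                _ = ε := one_mul ε
            have h2 : ‖t • (u (φ m) - u₀)‖ ≤ |t| * ‖u (φ m) - u₀‖ := by
              rw [norm_smul, Real.norm_eq_abs]
            linarith
          · have hB : Tendsto (fun m => |t| * ‖u (φ m) - u₀‖) atTop (nhds 0) := by
              have h5 : Tendsto (fun m => ‖u (φ m) - u₀‖) atTop (nhds 0) := by
                rw [← tendsto_iff_norm_sub_tendsto_zero]
                exact hconv
              simpa using h5.const_mul |t|
            simpa using hglim.add hB
        exact hclosed.mem_of_tendsto htd
          (Filter.Eventually.of_forall fun m => AddSubgroup.zsmul_mem G (hg1 (φ m)) _)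
      have hu₀W : u₀ ∈ W := (hWmem u₀).2 hline
      have hzero : u₀ = 0 := Submodule.disjoint_def.1 hWc.disjoint u₀ hu₀W hu₀W'
      rw [hzero] at hu₀
      simp at hu₀
    obtain ⟨ε, hε, hkey⟩ := key
    have hdisc : DiscreteTopology ↥DG := by
      rw [discreteTopology_iff_isOpen_singleton]
      intro x
      have hset : ({x} : Set ↥DG)
          = (fun y : ↥DG => (y : ↥W')) ⁻¹' Metric.ball (x : ↥W') ε := by
        ext y
        simp only [Set.mem_singleton_iff, Set.mem_preimage, Metric.mem_ball, dist_eq_norm]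
        constructor
        · rintro rfl; simpa using hε
        · intro hy
          have hmem : (y : ↥W') - (x : ↥W') ∈ DG := DG.sub_mem y.2 x.2
          have := hkey _ hmem hy
          exact Subtype.ext (by rwa [sub_eq_zero] at this)
      rw [hset]
      exact Metric.isOpen_ball.preimage continuous_subtype_val
    have hψ : ∃ ψ : ↥W' →ₗ[ℝ] ℝ, (∃ y : ↥W', ψ y ≠ 0) ∧ ∀ x ∈ DG, ∃ m : ℤ, ψ x = m := by
      rcases eq_or_ne (span ℝ (DG : Set ↥W')) ⊤ with hS | hS
      · haveI := hdisc
        haveI : IsZLattice ℝ DG := ⟨hS⟩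
        haveI : Module.Free ℤ ↥DG := ZLattice.module_free ℝ DG
        haveI : Module.Finite ℤ ↥DG := ZLattice.module_finite ℝ DG
        set c := Module.Free.chooseBasis ℤ ↥DG with hc
        set B := c.ofZLatticeBasis ℝ DG with hB
        have hne : Nonempty (Module.Free.ChooseBasisIndex ℤ ↥DG) := by
          by_contra hemp
          rw [not_nonempty_iff] at hemp
          have h0 : finrank ℝ ↥W' = 0 := by
            rw [finrank_eq_card_basis B]
            exact Fintype.card_eq_zero
          have hbot : W' = ⊥ := Submodule.finrank_eq_zero.1 h0
          rw [hbot] at hWc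
          have : W = ⊤ := by simpa using hWc.symm.sup_eq_top
          exact hWne this
        obtain ⟨j₀⟩ := hne
        set Z : Submodule ℤ ↥W' :=
          { carrier := {y : ↥W' | ∃ m : ℤ, B.coord j₀ y = m}
            zero_mem' := ⟨0, by simp⟩
            add_mem' := by
              rintro a b ⟨p, hp⟩ ⟨q, hq⟩
              refine ⟨p + q, ?_⟩
              rw [map_add, hp, hq]
              push_cast
              ring
            smul_mem' := by
              rintro nn a ⟨p, hp⟩
              refine ⟨nn * p, ?_⟩
              rw [map_zsmul, hp, zsmul_eq_mul]
              push_cast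
              ring } with hZ
        refine ⟨B.coord j₀, ⟨B j₀, by simp⟩, ?_⟩
        intro x hx
        have hx' : x ∈ span ℤ (Set.range (B : _ → ↥W')) := by
          rw [hB, Basis.ofZLatticeBasis_span]
          exact hx
        have hsub : span ℤ (Set.range (B : _ → ↥W')) ≤ Z := by
          rw [Submodule.span_le]
          rintro y ⟨j, rfl⟩
          refine ⟨if j = j₀ then 1 else 0, ?_⟩
          rw [Basis.coord_apply, Basis.repr_self, Finsupp.single_apply]
          split <;> simp
        exact hsub hx'
      · have hlt : span ℝ (DG : Set ↥W') < ⊤ := lt_top_iff_ne_top.2 hS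
        obtain ⟨x₀, -, hx₀⟩ := SetLike.exists_of_lt hlt
        set S := span ℝ (DG : Set ↥W') with hSdef
        have hx₀q : S.mkQ x₀ ≠ 0 := by
          simpa [Submodule.mkQ_apply, Submodule.Quotient.mk_eq_zero] using hx₀
        obtain ⟨f, hf⟩ : ∃ f : Module.Dual ℝ (↥W' ⧸ S), f (S.mkQ x₀) ≠ 0 := by
          by_contra hall
          push_neg at hall
          exact hx₀q ((forall_dual_apply_eq_zero_iff ℝ _).1 hall)
        refine ⟨f.comp S.mkQ, ⟨x₀, hf⟩, ?_⟩
        intro x hx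
        refine ⟨0, ?_⟩
        have hxS : x ∈ S := Submodule.subset_span hx
        have hq0 : S.mkQ x = 0 := by
          rw [Submodule.mkQ_apply, Submodule.Quotient.mk_eq_zero]
          exact hxS
        rw [LinearMap.comp_apply, hq0]
        simp
    obtain ⟨ψ, ⟨y₀, hy₀⟩, hψint⟩ := hψ
    set φf : (Fin k → ℝ) →ₗ[ℝ] ℝ := ψ.comp P with hφdef
    have hφint : ∀ g ∈ G, ∃ m : ℤ, φf g = m := by
      intro g hg
      exact hψint (P g) ((hDGmem (P g)).2 (hPG g hg))
    have hφne : ∃ x : Fin k → ℝ, φf x ≠ 0 := by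
      refine ⟨(y₀ : Fin k → ℝ), ?_⟩
      rw [hφdef, LinearMap.comp_apply, hPleft y₀]
      exact hy₀
    have hφα : φf α = 0 := by
      apply eq_zero_of_forall_mul_int
      intro t
      obtain ⟨m, hm⟩ := hφint (t • α) ((hWmem α).1 hαW t)
      exact ⟨m, by rw [← hm, map_smul, smul_eq_mul]⟩
    have hsingle : ∀ i : Fin k, (fun j => if i = j then (1:ℝ) else 0) ∈ G := by
      intro i
      apply hDG
      refine ⟨0, fun j => if i = j then 1 else 0, ?_⟩
      funext j
      by_cases h : i = j <;> simp [h]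
    choose c hcspec using fun i => hφint _ (hsingle i)
    have hexp : ∀ x : Fin k → ℝ, φf x = ∑ i, x i * c i := by
      intro x
      rw [LinearMap.pi_apply_eq_sum_univ φf x]
      exact Finset.sum_congr rfl fun i _ => by rw [hcspec i, smul_eq_mul]
    have hcne : ∃ i, c i ≠ 0 := by
      by_contra hall
      push_neg at hall
      obtain ⟨x, hx⟩ := hφne
      apply hx
      rw [hexp x]
      simp [hall]
    obtain ⟨i₀, hi₀⟩ := hcne
    have hsum : ∑ i, ((c i : ℚ)) • α i = 0 := by
      have h6 := hφα
      rw [hexp α] at h6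
      rw [← h6]
      apply Finset.sum_congr rfl
      intro i _
      rw [Rat.smul_def]
      push_cast
      ring
    have := Fintype.linearIndependent_iff.1 hα (fun i => (c i : ℚ)) hsum i₀
    exact hi₀ (by exact_mod_cast this)
  have hGtop : ∀ x : Fin k → ℝ, x ∈ G := by
    intro x
    have hx : x ∈ W := hWtop ▸ Submodule.mem_top
    exact hWG x hx
  rw [dense_iff_closure_eq]
  have hcl : closure (D : Set (Fin k → ℝ)) = (G : Set (Fin k → ℝ)) :=
    (AddSubgroup.topologicalClosure_coe).symm
  rw [show {x : Fin k → ℝ | ∃ t : ℝ, ∃ m : Fin k → ℤ, x = t • α + fun i => (m i : ℝ)}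
    = (D : Set (Fin k → ℝ)) from rfl, hcl]
  exact Set.eq_univ_of_forall hGtop

-- The span of the rational span of coordinates is inside span of repr coordinates
private lemma span_omega_le_span_repr {n : ℕ} {ω : Fin n → ℝ} {V : Submodule ℝ (Fin n → ℝ)}
    (hωV : ω ∈ V) {ι : Type*} [Fintype ι] (B : Basis ι ℝ ↥V)
    (hint : ∀ j i, ∃ m : ℤ, ((B j : ↥V) : Fin n → ℝ) i = m) :
    span ℚ (Set.range ω) ≤ span ℚ (Set.range fun j => B.repr ⟨ω, hωV⟩ j) := by
  classical
  rw [Submodule.span_le]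
  rintro x ⟨i, rfl⟩
  choose m hm using hint
  have hsum : ∑ j, B.repr ⟨ω, hωV⟩ j • B j = (⟨ω, hωV⟩ : ↥V) := B.sum_repr _
  have hval : ∑ j, B.repr ⟨ω, hωV⟩ j • ((B j : ↥V) : Fin n → ℝ) = ω := by
    have h2 := congrArg (Subtype.val) hsum
    simp only [Submodule.coe_sum, SetLike.val_smul] at h2
    exact h2
  have hωi : ω i = ∑ j, B.repr ⟨ω, hωV⟩ j * (m j i : ℝ) := by
    have := congrFun hval i
    rw [← this, Finset.sum_apply]
    exact Finset.sum_congr rfl fun j _ => by rw [Pi.smul_apply, smul_eq_mul, hm]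
  have : ω i = ∑ j, ((m j i : ℚ)) • (fun j' => B.repr ⟨ω, hωV⟩ j') j := by
    rw [hωi]
    apply Finset.sum_congr rfl
    intro j _
    rw [Rat.smul_def]
    push_cast
    ring
  rw [SetLike.mem_coe, this]
  exact Submodule.sum_mem _ fun j _ =>
    Submodule.smul_mem _ _ (Submodule.subset_span ⟨j, rfl⟩)

set_option maxHeartbeats 2000000 in
set_option synthInstance.maxHeartbeats 200000 in
/-- For nonzero ω ∈ ℝⁿ, the closure of the image of the line ℝω in ℝⁿ/ℤⁿ is the image of
a rational linear subspace V (spanned by integer vectors b₁,…,b_k) containing ω, of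
dimension k = dim_ℚ(ℚω₁ + ⋯ + ℚωₙ); moreover V ∩ ℤⁿ is the rank-k lattice spanned by the bᵢ. -/
theorem closure_line_in_n_torus (n : ℕ) (ω : Fin n → ℝ) (hω : ω ≠ 0) :
    ∃ b : Fin (Module.finrank ℚ (Submodule.span ℚ (Set.range ω))) → (Fin n → ℝ),
      (∀ j i, ∃ m : ℤ, b j i = (m : ℝ)) ∧
      LinearIndependent ℝ b ∧
      ω ∈ Submodule.span ℝ (Set.range b) ∧
      {v : Fin n → ℝ | v ∈ Submodule.span ℝ (Set.range b) ∧ ∀ i, ∃ m : ℤ, v i = (m : ℝ)} =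
        (Submodule.span ℤ (Set.range b) : Set (Fin n → ℝ)) ∧
      closure {p : Fin n → AddCircle (1 : ℝ) |
          ∃ t : ℝ, p = fun i => ((t * ω i : ℝ) : AddCircle (1 : ℝ))} =
        (fun v : Fin n → ℝ => fun i => ((v i : ℝ) : AddCircle (1 : ℝ))) ''
          (Submodule.span ℝ (Set.range b) : Set (Fin n → ℝ)) := by
  classical
  -- the submodule of integer vectors
  set Λ : Submodule ℤ (Fin n → ℝ) :=
    { carrier := {v : Fin n → ℝ | ∀ i, ∃ m : ℤ, v i = m}
      zero_mem' := fun i => ⟨0, by simp⟩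
      add_mem' := by
        rintro a b ha hb i
        obtain ⟨p, hp⟩ := ha i
        obtain ⟨q, hq⟩ := hb i
        exact ⟨p + q, by rw [Pi.add_apply, hp, hq]; push_cast; ring⟩
      smul_mem' := by
        rintro z a ha i
        obtain ⟨p, hp⟩ := ha i
        refine ⟨z * p, ?_⟩
        rw [Pi.smul_apply, hp, zsmul_eq_mul]
        push_cast
        ring } with hΛdef
  have hΛmem : ∀ v : Fin n → ℝ, v ∈ Λ ↔ ∀ i, ∃ m : ℤ, v i = m := fun v => Iff.rfl
  -- any ℤ-submodule of Λ is discrete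
  have hdiscaux : ∀ L : Submodule ℤ (Fin n → ℝ), L ≤ Λ → DiscreteTopology ↥L := by
    intro L hL
    have hsp : Λ ≤ span ℤ (Set.range ⇑(Pi.basisFun ℝ (Fin n))) := by
      intro v hv
      choose m hm using (hΛmem v).1 hv
      have hv2 : v = ∑ i, m i • (Pi.basisFun ℝ (Fin n)) i := by
        funext j
        rw [Finset.sum_apply]
        simp only [Pi.basisFun_apply, Pi.smul_apply, Pi.single_apply, zsmul_eq_mul]
        rw [Finset.sum_eq_single j (fun i _ hij => by simp [Ne.symm hij])
          (fun h => absurd (Finset.mem_univ j) h)]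
        simp [hm j]
      rw [hv2]
      exact Submodule.sum_mem _ fun i _ =>
        Submodule.smul_mem _ _ (Submodule.subset_span ⟨i, rfl⟩)
    haveI := ZSpan.discreteTopology_pi_basisFun (ι := Fin n)
    exact discrete_of_cont_inj'
      (f := fun x : ↥L => (⟨(x : Fin n → ℝ), hsp (hL x.2)⟩ :
        ↥(span ℤ (Set.range ⇑(Pi.basisFun ℝ (Fin n))))))
      (Continuous.subtype_mk continuous_subtype_val _)
      (fun x y hxy => by
        apply Subtype.ext
        simpa using congrArg Subtype.val hxy)
  -- rational structure of ω
  haveI hTfin : FiniteDimensional ℚ ↥(span ℚ (Set.range ω)) :=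
    FiniteDimensional.span_of_finite ℚ (Set.finite_range ω)
  set k := finrank ℚ ↥(span ℚ (Set.range ω)) with hk
  set tb : Basis (Fin k) ℚ ↥(span ℚ (Set.range ω)) := Module.finBasis ℚ _ with htb
  have hωmem : ∀ i, ω i ∈ span ℚ (Set.range ω) := fun i =>
    Submodule.subset_span (Set.mem_range_self i)
  set r : Fin k → (Fin n → ℝ) := fun j i => ((tb.repr ⟨ω i, hωmem i⟩ j : ℚ) : ℝ) with hr
  set V : Submodule ℝ (Fin n → ℝ) := span ℝ (Set.range r) with hV
  have hωV : ω ∈ V := by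
    have hωeq : ω = ∑ j, ((tb j : ℝ)) • r j := by
      funext i
      have hsum := congrArg Subtype.val (tb.sum_repr ⟨ω i, hωmem i⟩)
      simp only [Submodule.coe_sum, SetLike.val_smul, Rat.smul_def] at hsum
      rw [Finset.sum_apply]
      refine hsum.symm.trans ?_
      apply Finset.sum_congr rfl
      intro j _
      simp only [hr, Pi.smul_apply, smul_eq_mul]
      ring
    rw [hωeq]
    exact Submodule.sum_mem _ fun j _ =>
      Submodule.smul_mem _ _ (Submodule.subset_span ⟨j, rfl⟩)
  haveI hVfin : FiniteDimensional ℝ ↥V := FiniteDimensional.span_of_finite ℝ (Set.finite_range r)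
  -- the lattice L = V ∩ Λ
  set L : Submodule ℤ (Fin n → ℝ) := (V.restrictScalars ℤ) ⊓ Λ with hLdef
  have hLV : ∀ x ∈ L, x ∈ V := fun x hx => hx.1
  have hLΛ : L ≤ Λ := inf_le_right
  -- clearing denominators
  have hNr : ∀ j, ∃ N : ℤ, 0 < N ∧ (N : ℝ) • r j ∈ L := by
    intro j
    refine ⟨∏ i, ((tb.repr ⟨ω i, hωmem i⟩ j).den : ℤ), ?_, Submodule.mem_inf.2 ⟨?_, ?_⟩⟩
    · exact Finset.prod_pos fun i _ => by exact_mod_cast (tb.repr ⟨ω i, hωmem i⟩ j).den_pos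
    · rw [Submodule.restrictScalars_mem]
      exact Submodule.smul_mem _ _ (Submodule.subset_span ⟨j, rfl⟩)
    · rw [hΛmem]
      intro i
      set q : ℚ := tb.repr ⟨ω i, hωmem i⟩ j with hq
      have hdvd : (q.den : ℤ) ∣ ∏ i', ((tb.repr ⟨ω i', hωmem i'⟩ j).den : ℤ) :=
        Finset.dvd_prod_of_mem _ (Finset.mem_univ i)
      obtain ⟨s, hs⟩ := hdvd
      refine ⟨q.num * s, ?_⟩
      have hQ : ((∏ i', ((tb.repr ⟨ω i', hωmem i'⟩ j).den : ℤ) : ℤ) : ℚ) * q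
          = ((q.num * s : ℤ) : ℚ) := by
        rw [hs]
        push_cast
        rw [mul_comm (q.den : ℚ) (s : ℚ), mul_assoc, mul_comm (q.den : ℚ) q, Rat.mul_den_eq_num]
        ring
      have := congrArg (fun x : ℚ => (x : ℝ)) hQ
      push_cast at this
      rw [Pi.smul_apply, smul_eq_mul]
      rw [hr]
      push_cast
      exact this
  -- L spans V over ℝ
  have hspanL : span ℝ (L : Set (Fin n → ℝ)) = V := by
    apply le_antisymm
    · rw [Submodule.span_le]
      exact fun x hx => hLV x hx
    · rw [hV, Submodule.span_le]
      rintro x ⟨j, rfl⟩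
      obtain ⟨N, hN, hNmem⟩ := hNr j
      have hNne : ((N : ℝ)) ≠ 0 := by positivity
      have : r j = (N : ℝ)⁻¹ • ((N : ℝ) • r j) := by rw [inv_smul_smul₀ hNne]
      rw [SetLike.mem_coe, this]
      exact Submodule.smul_mem _ _ (Submodule.subset_span hNmem)
  -- the lattice inside V
  set L' : Submodule ℤ ↥V := L.comap (V.subtype.restrictScalars ℤ) with hL'def
  have hL'mem : ∀ x : ↥V, x ∈ L' ↔ (x : Fin n → ℝ) ∈ L := fun x => Iff.rfl
  haveI hLdisc : DiscreteTopology ↥L := hdiscaux L hLΛ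
  haveI hL'disc : DiscreteTopology ↥L' := by
    exact discrete_of_cont_inj'
      (f := fun x : ↥L' => (⟨((x : ↥V) : Fin n → ℝ), x.2⟩ : ↥L))
      (Continuous.subtype_mk (continuous_subtype_val.comp continuous_subtype_val) _)
      (fun x y hxy => by
        apply Subtype.ext
        apply Subtype.ext
        simpa using congrArg Subtype.val hxy)
  have hmapL' : Submodule.map (V.subtype.restrictScalars ℤ) L' = L := by
    apply le_antisymm
    · rintro x ⟨y, hy, rfl⟩
      exact hy
    · intro x hx
      exact ⟨⟨x, hLV x hx⟩, hx, rfl⟩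
  have himgL' : V.subtype '' (L' : Set ↥V) = (L : Set (Fin n → ℝ)) := by
    ext x
    constructor
    · rintro ⟨y, hy, rfl⟩; exact hy
    · intro hx; exact ⟨⟨x, hLV x hx⟩, hx, rfl⟩
  haveI : IsZLattice ℝ L' := by
    constructor
    apply Submodule.map_injective_of_injective (Submodule.injective_subtype V)
    rw [Submodule.map_span, himgL', hspanL, Submodule.map_top, Submodule.range_subtype]
  haveI : Module.Free ℤ ↥L' := ZLattice.module_free ℝ L'
  haveI : Module.Finite ℤ ↥L' := ZLattice.module_finite ℝ L'
  set c := Module.Free.chooseBasis ℤ ↥L' with hc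
  set B₀ := c.ofZLatticeBasis ℝ L' with hB₀
  have hB₀mem : ∀ j, B₀ j ∈ L' := by
    intro j
    rw [hB₀, Basis.ofZLatticeBasis_apply]
    exact (c j).2
  have hcard : Fintype.card (Module.Free.ChooseBasisIndex ℤ ↥L') = finrank ℝ ↥V := by
    rw [← finrank_eq_card_chooseBasisIndex, ZLattice.rank ℝ]
  -- dimension count
  have hupper : finrank ℝ ↥V ≤ k := by
    have h1 : finrank ℝ ↥V ≤ (Set.range r).toFinset.card := by
      rw [hV]
      exact finrank_span_le_card (Set.range r)
    have h2 : (Set.range r).toFinset.card ≤ k := by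
      rw [Set.toFinset_range]
      exact (Finset.card_image_le).trans (by simp)
    exact h1.trans h2
  have hlower : k ≤ finrank ℝ ↥V := by
    have hint : ∀ j i, ∃ m : ℤ, ((B₀ j : ↥V) : Fin n → ℝ) i = m := by
      intro j i
      exact (hΛmem _).1 (hLΛ ((hL'mem (B₀ j)).1 (hB₀mem j))) i
    have hle := span_omega_le_span_repr hωV B₀ hint
    have hfin2 : FiniteDimensional ℚ
        ↥(span ℚ (Set.range fun j => B₀.repr ⟨ω, hωV⟩ j)) :=
      FiniteDimensional.span_of_finite ℚ (Set.finite_range _)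
    calc k = finrank ℚ ↥(span ℚ (Set.range ω)) := hk
      _ ≤ finrank ℚ ↥(span ℚ (Set.range fun j => B₀.repr ⟨ω, hωV⟩ j)) := finrank_mono hle
      _ ≤ (Set.range fun j => B₀.repr ⟨ω, hωV⟩ j).toFinset.card := by
          have := finrank_span_le_card (R := ℚ) (Set.range fun j => B₀.repr ⟨ω, hωV⟩ j)
          exact this
      _ ≤ Fintype.card (Module.Free.ChooseBasisIndex ℤ ↥L') := by
          rw [Set.toFinset_range]
          exact (Finset.card_image_le).trans (le_of_eq (Finset.card_univ))
      _ = finrank ℝ ↥V := hcard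
  have hdim : finrank ℝ ↥V = k := le_antisymm hupper hlower
  set e : Module.Free.ChooseBasisIndex ℤ ↥L' ≃ Fin k :=
    Fintype.equivFinOfCardEq (by rw [hcard, hdim]) with he
  set B : Basis (Fin k) ℝ ↥V := B₀.reindex e with hB
  have hBmem : ∀ j, B j ∈ L' := by
    intro j
    rw [hB, Basis.reindex_apply]
    exact hB₀mem _
  set b : Fin k → (Fin n → ℝ) := fun j => ((B j : ↥V) : Fin n → ℝ) with hb
  have hbL : ∀ j, b j ∈ L := fun j => (hL'mem (B j)).1 (hBmem j)
  have hbint : ∀ j i, ∃ m : ℤ, b j i = (m : ℝ) := fun j i => (hΛmem _).1 (hLΛ (hbL j)) i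
  have hbind : LinearIndependent ℝ b := by
    have := B.linearIndependent.map' V.subtype (Submodule.ker_subtype V)
    exact this
  have hrange : Set.range b = V.subtype '' Set.range ⇑B := by
    rw [← Set.range_comp]
    rfl
  have hspanb : span ℝ (Set.range b) = V := by
    rw [hrange, ← Submodule.map_span, Basis.span_eq, Submodule.map_top, Submodule.range_subtype]
  have hωb : ω ∈ span ℝ (Set.range b) := by rw [hspanb]; exact hωV
  have h2span : span ℤ (Set.range ⇑B) = L' := by
    rw [hB]
    have : Set.range ⇑(B₀.reindex e) = Set.range ⇑B₀ := Basis.range_reindex B₀ e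
    rw [this, hB₀, Basis.ofZLatticeBasis_span]
  have hspanZb : span ℤ (Set.range b) = L := by
    have h1 : Set.range b = (V.subtype.restrictScalars ℤ) '' Set.range ⇑B := hrange
    rw [h1, ← Submodule.map_span, h2span, hmapL']
  have hlat : {v : Fin n → ℝ | v ∈ span ℝ (Set.range b) ∧ ∀ i, ∃ m : ℤ, v i = (m : ℝ)}
      = (span ℤ (Set.range b) : Set (Fin n → ℝ)) := by
    rw [hspanZb]
    ext v
    simp only [Set.mem_setOf_eq, SetLike.mem_coe, hspanb]
    constructor
    · rintro ⟨h1, h2⟩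
      exact Submodule.mem_inf.2 ⟨Submodule.restrictScalars_mem ℤ V v |>.2 h1, (hΛmem v).2 h2⟩
    · intro hvL
      exact ⟨hLV v hvL, (hΛmem v).1 (hLΛ hvL)⟩
  refine ⟨b, hbint, hbind, hωb, hlat, ?_⟩
  rw [hspanb]
  set π : (Fin n → ℝ) → (Fin n → AddCircle (1 : ℝ)) :=
    fun v => fun i => ((v i : ℝ) : AddCircle (1 : ℝ)) with hπ
  have hπcont : Continuous π := by
    apply continuous_pi
    intro i
    exact continuous_quotient_mk'.comp (continuous_apply i)
  have hπzero : ∀ v ∈ Λ, π v = 0 := by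
    intro v hv
    funext i
    obtain ⟨m, hm⟩ := (hΛmem v).1 hv i
    show ((v i : ℝ) : AddCircle (1 : ℝ)) = 0
    rw [hm, QuotientAddGroup.eq_zero_iff]
    exact ⟨m, by simp⟩
  have hπadd : ∀ v w : Fin n → ℝ, π (v + w) = π v + π w := by
    intro v w
    funext i
    show ((v i + w i : ℝ) : AddCircle (1 : ℝ)) = _
    push_cast
    rfl
  apply Set.Subset.antisymm
  · apply closure_minimal
    · rintro p ⟨t, rfl⟩
      exact ⟨t • ω, V.smul_mem t hωV, rfl⟩
    · have hbounded : Bornology.IsBounded (V.subtype '' (ZSpan.fundamentalDomain B)) := by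
        obtain ⟨C, hC⟩ := isBounded_iff_forall_norm_le.1 (ZSpan.fundamentalDomain_isBounded B)
        apply isBounded_iff_forall_norm_le.2 ⟨C, ?_⟩
        rintro x ⟨y, hy, rfl⟩
        exact hC y hy
      have hKcompact : IsCompact (closure (V.subtype '' (ZSpan.fundamentalDomain B))) :=
        Metric.isCompact_of_isClosed_isBounded isClosed_closure hbounded.closure
      have hKV : closure (V.subtype '' (ZSpan.fundamentalDomain B)) ⊆ (V : Set (Fin n → ℝ)) :=
        closure_minimal (by rintro x ⟨y, hy, rfl⟩; exact y.2)
          (Submodule.closed_of_finiteDimensional V)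
      have himgeq : π '' (V : Set (Fin n → ℝ))
          = π '' closure (V.subtype '' (ZSpan.fundamentalDomain B)) := by
        apply Set.Subset.antisymm
        · rintro p ⟨v, hv, rfl⟩
          set x : ↥V := ⟨v, hv⟩ with hx
          have hfr : x = ZSpan.fract B x + (ZSpan.floor B x : ↥V) := by
            rw [ZSpan.fract_apply]
            abel
          have hfloorL : ((ZSpan.floor B x : ↥V) : Fin n → ℝ) ∈ Λ := by
            have hmem : (ZSpan.floor B x : ↥V) ∈ span ℤ (Set.range ⇑B) := (ZSpan.floor B x).2
            exact hLΛ ((hL'mem _).1 (h2span.le hmem))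
          have hveq : v = ((ZSpan.fract B x : ↥V) : Fin n → ℝ)
              + ((ZSpan.floor B x : ↥V) : Fin n → ℝ) := by
            have h3 := congrArg Subtype.val hfr
            simpa using h3
          have hπv : π v = π ((ZSpan.fract B x : ↥V) : Fin n → ℝ) := by
            rw [hveq, hπadd, hπzero _ hfloorL, add_zero]
          rw [hπv]
          exact ⟨_, subset_closure ⟨ZSpan.fract B x, ZSpan.fract_mem_fundamentalDomain B x, rfl⟩,
            rfl⟩
        · exact fun _ ⟨y, hy, h⟩ => ⟨y, hKV hy, h⟩
      rw [himgeq]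
      exact (hKcompact.image hπcont).isClosed
  · rintro p ⟨v, hv, rfl⟩
    have hv' : v ∈ V := hv
    set x : ↥V := ⟨v, hv'⟩ with hx
    set αc : Fin k → ℝ := fun j => B.repr ⟨ω, hωV⟩ j with hαc
    have hαind : LinearIndependent ℚ αc := by
      rw [linearIndependent_iff_card_eq_finrank_span, Fintype.card_fin]
      haveI hfinα : FiniteDimensional ℚ ↥(span ℚ (Set.range αc)) :=
        FiniteDimensional.span_of_finite ℚ (Set.finite_range _)
      have hup : finrank ℚ ↥(span ℚ (Set.range αc)) ≤ k := by
        refine (finrank_span_le_card (R := ℚ) (Set.range αc)).trans ?_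
        rw [Set.toFinset_range]
        have hcu : (Finset.univ : Finset (Fin k)).card = k := by
          rw [Finset.card_univ, Fintype.card_fin]
        exact (Finset.card_image_le).trans (le_of_eq hcu)
      have hintB : ∀ j i, ∃ m : ℤ, ((B j : ↥V) : Fin n → ℝ) i = m := fun j i => hbint j i
      have hlo : k ≤ finrank ℚ ↥(span ℚ (Set.range αc)) := by
        have hle := span_omega_le_span_repr hωV B hintB
        exact finrank_mono hle
      have : finrank ℚ ↥(span ℚ (Set.range αc)) = k := le_antisymm hup hlo
      simp only [Set.finrank]
      exact this.symm
    have hdense := dense_line_int hαind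
    have hsums : ∀ y : ↥V, ((y : Fin n → ℝ)) = ∑ j, B.repr y j • b j := by
      intro y
      have hs := congrArg Subtype.val (B.sum_repr y)
      simp only [Submodule.coe_sum, SetLike.val_smul] at hs
      exact hs.symm
    have hgω : ∑ j, αc j • b j = ω := (hsums ⟨ω, hωV⟩).symm
    set g : (Fin k → ℝ) → (Fin n → ℝ) := fun y => ∑ j, y j • b j with hg
    have hgcont : Continuous g := by
      apply continuous_finset_sum
      intro j _
      exact (continuous_apply j).smul continuous_const
    set Dset : Set (Fin k → ℝ) :=
      {y : Fin k → ℝ | ∃ t : ℝ, ∃ m : Fin k → ℤ, y = t • αc + fun i => (m i : ℝ)} with hDset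
    have hvC : v ∈ closure (g '' Dset) := by
      have hxc : (fun j => B.repr x j) ∈ closure Dset := by
        rw [hdense.closure_eq]
        trivial
      have hvg : v = g (fun j => B.repr x j) := hsums x
      rw [hvg]
      exact image_closure_subset_closure_image hgcont ⟨_, hxc, rfl⟩
    have hπsub : π '' (g '' Dset) ⊆ {p : Fin n → AddCircle (1 : ℝ) |
        ∃ t : ℝ, p = fun i => ((t * ω i : ℝ) : AddCircle (1 : ℝ))} := by
      rintro q ⟨w, ⟨y, ⟨t, m, rfl⟩, rfl⟩, rfl⟩
      refine ⟨t, ?_⟩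
      have hgdecomp : g (t • αc + fun i => (m i : ℝ)) = t • ω + ∑ j, (m j : ℝ) • b j := by
        rw [hg]
        simp only [Pi.add_apply, Pi.smul_apply, smul_eq_mul, add_smul]
        rw [Finset.sum_add_distrib, ← hgω, Finset.smul_sum]
        refine congrArg₂ (· + ·) ?_ rfl
        apply Finset.sum_congr rfl
        intro j _
        rw [smul_smul]
      have hintm : (∑ j, (m j : ℝ) • b j) ∈ Λ := by
        apply Submodule.sum_mem
        intro j _
        rw [Int.cast_smul_eq_zsmul ℝ]
        exact Submodule.smul_mem Λ (m j) (hLΛ (hbL j))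
      rw [hgdecomp, hπadd, hπzero _ hintm, add_zero]
      rfl
    have hstep : π v ∈ closure (π '' (g '' Dset)) :=
      image_closure_subset_closure_image hπcont ⟨v, hvC, rfl⟩
    exact closure_mono hπsub hstep
end

section
/- For any lattice Γ = ℤv₁ + ⋯ + ℤvₙ in ℝⁿ (v₁,…,vₙ a basis of ℝⁿ) and any line L ⊂ ℝⁿ, there exists a linear subspace V ≤ ℝⁿ and a point p such that the closure of the image of L in ℝⁿ/Γ equals the image of p + V. -/
open Filter Topology

/-- A closed subset of a finite-dimensional normed space that is stable under `ℤ`-smul and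
contains no nonzero line is uniformly discrete at `0`. -/
lemma no_line_discrete {E : Type*} [NormedAddCommGroup E] [NormedSpace ℝ E]
    [FiniteDimensional ℝ E] (K : Set E) (hsub : ∀ (m : ℤ), ∀ x ∈ K, m • x ∈ K)
    (hK : IsClosed K)
    (hline : ∀ v : E, (∀ t : ℝ, t • v ∈ K) → v = 0) :
    ∃ ε > 0, ∀ x ∈ K, ‖x‖ < ε → x = 0 := by
  by_contra hcon
  push_neg at hcon
  choose x hxK hxn hx0 using fun k : ℕ => hcon (1 / (k + 1)) (by positivity)
  have hxpos : ∀ k, 0 < ‖x k‖ := fun k => norm_pos_iff.2 (hx0 k)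
  set u : ℕ → E := fun k => ‖x k‖⁻¹ • x k with hu
  have husph : ∀ k, u k ∈ Metric.sphere (0 : E) 1 := by
    intro k
    simp [u, norm_smul, abs_of_pos (inv_pos.2 (hxpos k)), inv_mul_cancel₀ (hxpos k).ne']
  obtain ⟨v, hv, φ, hφ, hconv⟩ := (isCompact_sphere (0 : E) 1).tendsto_subseq husph
  have hvnorm : ‖v‖ = 1 := by simpa using hv
  have hxt : Tendsto (fun k => ‖x (φ k)‖) atTop (𝓝 0) := by
    refine squeeze_zero (fun k => (norm_nonneg _)) (fun k => ?_)
      tendsto_one_div_add_atTop_nhds_zero_nat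
    have h1 : ‖x (φ k)‖ < 1 / (φ k + 1) := hxn (φ k)
    have h2 : (1 : ℝ) / (φ k + 1) ≤ 1 / (k + 1) := by
      apply one_div_le_one_div_of_le (by positivity)
      have : k ≤ φ k := hφ.le_apply
      exact_mod_cast Nat.succ_le_succ this
    linarith
  have hvK : ∀ t : ℝ, t • v ∈ K := by
    intro t
    set m : ℕ → ℤ := fun k => ⌊t / ‖x (φ k)‖⌋ with hm
    have hmt : Tendsto (fun k => (m k : ℝ) * ‖x (φ k)‖) atTop (𝓝 t) := by
      have hbound : ∀ k, ‖(m k : ℝ) * ‖x (φ k)‖ - t‖ ≤ ‖x (φ k)‖ := by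
        intro k
        have hc : (0:ℝ) < ‖x (φ k)‖ := hxpos _
        set a : ℝ := t / ‖x (φ k)‖ with ha
        have hfr : |(⌊a⌋ : ℝ) - a| ≤ 1 := by
          rw [abs_sub_comm, abs_of_nonneg (by linarith [Int.floor_le a])]
          linarith [Int.lt_floor_add_one a]
        have heq : (m k : ℝ) * ‖x (φ k)‖ - t = ((⌊a⌋ : ℝ) - a) * ‖x (φ k)‖ := by
          field_simp [hm, ha]
          show (⌊a⌋ : ℝ) * ‖x (φ k)‖ - t = ‖x (φ k)‖ * ((⌊a⌋ : ℝ) - a)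
          rw [ha, mul_sub, mul_div_assoc', mul_div_cancel_left₀ _ hc.ne']
          ring
        rw [heq]
        rw [Real.norm_eq_abs, abs_mul, abs_of_pos hc]
        nlinarith
      have h0 : Tendsto (fun k => (m k : ℝ) * ‖x (φ k)‖ - t) atTop (𝓝 0) :=
        squeeze_zero_norm hbound hxt
      have := h0.add_const t
      simpa using this
    have heq : ∀ k, (m k) • x (φ k) = ((m k : ℝ) * ‖x (φ k)‖) • u (φ k) := by
      intro k
      have : ((m k : ℝ)) • x (φ k) = (m k) • x (φ k) := Int.cast_smul_eq_zsmul ℝ _ _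
      rw [← this, mul_smul, hu]
      rw [smul_inv_smul₀ (hxpos (φ k)).ne']
    have hlim : Tendsto (fun k => (m k) • x (φ k)) atTop (𝓝 (t • v)) := by
      simp only [heq]
      exact hmt.smul hconv
    exact hK.mem_of_tendsto hlim (Eventually.of_forall fun k => hsub _ _ (hxK _))
  exact absurd (hline v hvK) (fun h => by simp [h] at hvnorm)

/-- A subgroup whose closure is uniformly discrete at `0` is closed. -/
lemma closed_of_eps {E : Type*} [NormedAddCommGroup E] (D : AddSubgroup E) {ε : ℝ}
    (hε : 0 < ε) (hsep : ∀ x ∈ closure (D : Set E), ‖x‖ < ε → x = 0) :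
    IsClosed (D : Set E) := by
  refine isClosed_of_closure_subset fun x hx => ?_
  obtain ⟨d, hdD, hd⟩ := Metric.mem_closure_iff.1 hx ε hε
  have hxd : x - d ∈ closure (D : Set E) := by
    have h1 : x ∈ D.topologicalClosure := hx
    have h2 : d ∈ D.topologicalClosure := D.le_topologicalClosure hdD
    exact sub_mem h1 h2
  have : x - d = 0 := hsep _ hxd (by rwa [← dist_eq_norm])
  rwa [sub_eq_zero.1 this]


/-- For any lattice Γ = ℤv₁ + ⋯ + ℤvₙ in ℝⁿ (where the vᵢ form a basis of ℝⁿ) and any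
affine line p₀ + ℝω in ℝⁿ, the closure of the image of the line in ℝⁿ/Γ is the image of
some translate p + V of a linear subspace V of ℝⁿ. -/
theorem closure_line_in_general_torus (n : ℕ) (b : Module.Basis (Fin n) ℝ (Fin n → ℝ))
    (Γ : AddSubgroup (Fin n → ℝ))
    (hΓ : (Γ : Set (Fin n → ℝ)) = (Submodule.span ℤ (Set.range b) : Set (Fin n → ℝ)))
    (p₀ ω : Fin n → ℝ) :
    ∃ (V : Submodule ℝ (Fin n → ℝ)) (p : Fin n → ℝ),
      closure ((QuotientAddGroup.mk' Γ) '' {x : Fin n → ℝ | ∃ t : ℝ, x = p₀ + t • ω}) =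
        (QuotientAddGroup.mk' Γ) '' {x : Fin n → ℝ | ∃ v ∈ V, x = p + v} := by
  classical
  set π := QuotientAddGroup.mk' Γ with hπdef
  set Rsub : AddSubgroup (Fin n → ℝ) := (Submodule.span ℝ {ω}).toAddSubgroup with hRdef
  set C : AddSubgroup ((Fin n → ℝ) ⧸ Γ) := (Rsub.map π).topologicalClosure with hCdef
  set H : AddSubgroup (Fin n → ℝ) := C.comap π with hHdef
  have hπcont : Continuous π := continuous_quot_mk
  have hHclosed : IsClosed (H : Set (Fin n → ℝ)) := by
    have : (H : Set (Fin n → ℝ)) = ⇑π ⁻¹' (C : Set _) := rfl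
    rw [this, hCdef]
    exact (Rsub.map π).isClosed_topologicalClosure.preimage hπcont
  have hΓH : ∀ γ ∈ Γ, γ ∈ H := by
    intro γ hγ
    have : π γ = 0 := (QuotientAddGroup.eq_zero_iff γ).2 hγ
    simpa [hHdef, AddSubgroup.mem_comap, this] using C.zero_mem
  have hωH : ∀ c : ℝ, c • ω ∈ H := by
    intro c
    have h1 : c • ω ∈ Rsub := Submodule.mem_span_singleton.2 ⟨c, rfl⟩
    exact (Rsub.map π).le_topologicalClosure ⟨c • ω, h1, rfl⟩
  set V : Submodule ℝ (Fin n → ℝ) :=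
    { carrier := {v | ∀ t : ℝ, t • v ∈ H},
      add_mem' := fun hv hw t => by simpa [smul_add] using H.add_mem (hv t) (hw t),
      zero_mem' := fun t => by simpa using H.zero_mem,
      smul_mem' := fun c v hv t => by simpa [smul_smul] using hv (t * c) } with hVdef
  have hVmem : ∀ v : Fin n → ℝ, v ∈ V ↔ ∀ t : ℝ, t • v ∈ H := fun v => Iff.rfl
  have hVH : ∀ v ∈ V, v ∈ H := fun v hv => by simpa using (hVmem v).1 hv 1
  have hRV : (Rsub : Set (Fin n → ℝ)) ⊆ (V : Set (Fin n → ℝ)) := by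
    intro x hx
    obtain ⟨a, rfl⟩ := Submodule.mem_span_singleton.1 hx
    intro t
    simpa [smul_smul] using hωH (t * a)
  obtain ⟨W, hW⟩ := Submodule.exists_isCompl V
  set f : (Fin n → ℝ) →ₗ[ℝ] (Fin n → ℝ) :=
    W.subtype ∘ₗ Submodule.projectionOnto W V hW.symm with hfdef
  have hfcont : Continuous f := f.continuous_of_finiteDimensional
  have hfW : ∀ x, f x ∈ W := fun x => (Submodule.projectionOnto W V hW.symm x).2
  have hfV : ∀ x, f x = 0 ↔ x ∈ V := by
    intro x
    rw [hfdef]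
    simp [Submodule.projectionOnto_apply_eq_zero_iff]
  have hfsub : ∀ x, x - f x ∈ V := by
    intro x
    apply (hfV _).1
    have hffx : f (f x) = f x := by
      simp only [hfdef, LinearMap.comp_apply, Submodule.subtype_apply]
      rw [Submodule.projectionOnto_apply_left hW.symm]
    rw [map_sub, hffx, sub_self]
  set D : AddSubgroup (Fin n → ℝ) := Γ.map f.toAddMonoidHom with hDdef
  have hDHW : (D : Set (Fin n → ℝ)) ⊆ (H : Set (Fin n → ℝ)) ∩ W := by
    rintro _ ⟨γ, hγ, rfl⟩
    refine ⟨?_, hfW γ⟩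
    have h1 : γ - f γ ∈ H := hVH _ (hfsub γ)
    have h2 : f.toAddMonoidHom γ = γ - (γ - f γ) := by simp
    rw [h2]
    exact H.sub_mem (hΓH γ hγ) h1
  have hclD : closure (D : Set (Fin n → ℝ)) ⊆ (H : Set (Fin n → ℝ)) ∩ W :=
    closure_minimal hDHW (hHclosed.inter W.closed_of_finiteDimensional)
  obtain ⟨ε, hε, hdisc⟩ := no_line_discrete (closure (D : Set (Fin n → ℝ)))
    (fun m x hx => by
      have : x ∈ D.topologicalClosure := hx
      exact zsmul_mem this m)
    isClosed_closure
    (fun v hv => by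
      have hvV : v ∈ V := fun t => (hclD (hv t)).1
      have hvW : v ∈ W := by simpa using (hclD (hv 1)).2
      exact (Submodule.disjoint_def.1 hW.disjoint) v hvV hvW)
  have hDclosed : IsClosed (D : Set (Fin n → ℝ)) := closed_of_eps D hε hdisc
  -- saturation of π '' V
  have hsat : π ⁻¹' (π '' (V : Set (Fin n → ℝ))) = f ⁻¹' (D : Set (Fin n → ℝ)) := by
    ext x
    simp only [Set.mem_preimage, Set.mem_image, SetLike.mem_coe]
    constructor
    · rintro ⟨v, hv, heq⟩
      have hxv : x - v ∈ Γ := by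
        have h0 : π (x - v) = 0 := by rw [map_sub]; exact sub_eq_zero.2 heq.symm
        exact (QuotientAddGroup.eq_zero_iff _).1 h0
      refine ⟨x - v, hxv, ?_⟩
      have : f v = 0 := (hfV v).2 hv
      simp only [LinearMap.toAddMonoidHom_coe]
      rw [map_sub, this, sub_zero]
    · rintro ⟨γ, hγ, heq⟩
      refine ⟨x - γ, ?_, ?_⟩
      · apply (hfV _).1
        rw [map_sub]
        rw [show f.toAddMonoidHom γ = f γ from rfl] at heq
        rw [heq, sub_self]
      · have : π γ = 0 := (QuotientAddGroup.eq_zero_iff γ).2 hγ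
        rw [map_sub, this, sub_zero]
  have hπVclosed : IsClosed (π '' (V : Set (Fin n → ℝ))) := by
    rw [← (QuotientAddGroup.isQuotientMap_mk Γ).isClosed_preimage]
    have : (QuotientAddGroup.mk : (Fin n → ℝ) → _) ⁻¹' (π '' (V : Set (Fin n → ℝ)))
        = π ⁻¹' (π '' (V : Set (Fin n → ℝ))) := rfl
    rw [this, hsat]
    exact hDclosed.preimage hfcont
  have hCV : (C : Set ((Fin n → ℝ) ⧸ Γ)) = π '' (V : Set (Fin n → ℝ)) := by
    apply subset_antisymm
    · rw [hCdef, AddSubgroup.topologicalClosure_coe]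
      apply closure_minimal _ hπVclosed
      rw [AddSubgroup.coe_map]
      exact Set.image_mono hRV
    · rintro _ ⟨v, hv, rfl⟩
      exact hVH v hv
  refine ⟨V, p₀, ?_⟩
  have hL : π '' {x : Fin n → ℝ | ∃ t : ℝ, x = p₀ + t • ω}
      = (fun y => π p₀ + y) '' (π '' (Rsub : Set (Fin n → ℝ))) := by
    ext y
    constructor
    · rintro ⟨x, ⟨t, rfl⟩, rfl⟩
      exact ⟨π (t • ω), ⟨t • ω, Submodule.mem_span_singleton.2 ⟨t, rfl⟩, rfl⟩,
        (map_add π p₀ (t • ω)).symm⟩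
    · rintro ⟨_, ⟨r, hr, rfl⟩, rfl⟩
      obtain ⟨t, rfl⟩ := Submodule.mem_span_singleton.1 hr
      exact ⟨p₀ + t • ω, ⟨t, rfl⟩, map_add π p₀ (t • ω)⟩
  rw [hL]
  have hhomeo : closure ((fun y => π p₀ + y) '' (π '' (Rsub : Set (Fin n → ℝ))))
      = (fun y => π p₀ + y) '' closure (π '' (Rsub : Set (Fin n → ℝ))) :=
    ((Homeomorph.addLeft (π p₀)).image_closure _).symm
  rw [hhomeo]
  have hclR : closure (π '' (Rsub : Set (Fin n → ℝ))) = (C : Set _) := by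
    rw [hCdef, AddSubgroup.topologicalClosure_coe, AddSubgroup.coe_map]
  rw [hclR, hCV, ← Set.image_comp]
  ext y
  simp only [Set.mem_image, Function.comp_apply, SetLike.mem_coe, Set.mem_setOf_eq]
  constructor
  · rintro ⟨v, hv, rfl⟩
    exact ⟨p₀ + v, ⟨v, hv, rfl⟩, (map_add π p₀ v).symm⟩
  · rintro ⟨_, ⟨v, hv, rfl⟩, rfl⟩
    exact ⟨v, hv, (map_add π p₀ v)⟩
end
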